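/- Let X be a connected noncompact complex manifold of dimension > 1 and f = (f₁,…,f_q) : X → ℂ^q a nonconstant holomorphic map. Then for every compact K ⊆ X, the set X \ f⁻¹(f(K)) is nonempty and not relatively compact in X. -/

import Mathlib

open Set Metric Filter Topology

lemma no_compact_fiber {n : ℕ} (hn : 1 < n)
    {U : Set (EuclideanSpace ℂ (Fin n))} (hU : IsOpen U)
    {g : EuclideanSpace ℂ (Fin n) → ℂ} (hg : DifferentiableOn ℂ g U)
    {a : ℂ} (hM : IsCompact {x | x ∈ U ∧ g x = a})
    (hne : {x | x ∈ U ∧ g x = a}.Nonempty) : False := by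
  set M := {x | x ∈ U ∧ g x = a} with hMdef
  have hMU : M ⊆ U := fun x hx => hx.1
  have hMclosed : IsClosed M := hM.isClosed
  set i₁ : Fin n := ⟨0, by omega⟩ with hi1
  set i₂ : Fin n := ⟨1, hn⟩ with hi2
  have h12 : i₁ ≠ i₂ := by simp [hi1, hi2, Fin.ext_iff]
  set e₁ : EuclideanSpace ℂ (Fin n) := EuclideanSpace.single i₁ 1 with he1
  set e₂ : EuclideanSpace ℂ (Fin n) := EuclideanSpace.single i₂ 1 with he2
  have hne₁ : ‖e₁‖ = 1 := by simp [he1, EuclideanSpace.norm_single]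
  have hne₂ : ‖e₂‖ = 1 := by simp [he2, EuclideanSpace.norm_single]
  obtain ⟨ρ, hρ0, hρU⟩ := hM.exists_cthickening_subset_open hU hMU
  set Q := Metric.cthickening ρ M with hQdef
  have hQ : IsCompact Q := hM.cthickening
  -- maximizer of the real part of the first coordinate on M
  have hℓc : ContinuousOn (fun x : EuclideanSpace ℂ (Fin n) => (x i₁).re) M :=
    (Complex.continuous_re.comp (EuclideanSpace.proj (𝕜 := ℂ) i₁).continuous).continuousOn
  obtain ⟨p, hpM, hpmax⟩ := hM.exists_isMaxOn hne hℓc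
  have hpU : p ∈ U := hpM.1
  -- the affine two-parameter family
  set X : ℂ → ℂ → EuclideanSpace ℂ (Fin n) := fun c t => p + c • e₁ + t • e₂ with hXdef
  have hXd : ∀ c : ℂ, Differentiable ℂ (fun t : ℂ => X c t) := fun c =>
    (differentiable_const _).add (differentiable_id.smul_const e₂)
  have hXc : ∀ c : ℂ, Continuous (fun t : ℂ => X c t) := fun c => (hXd c).continuous
  have hX00 : X 0 0 = p := by simp [hXdef]
  have hXQ : ∀ c t : ℂ, ‖c‖ + ‖t‖ ≤ ρ → X c t ∈ Q := by
    intro c t h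
    refine Metric.mem_cthickening_of_dist_le (X c t) p ρ M hpM ?_
    have h1 : X c t - p = c • e₁ + t • e₂ := by simp [hXdef]; abel
    rw [dist_eq_norm, h1]
    calc ‖c • e₁ + t • e₂‖ ≤ ‖c • e₁‖ + ‖t • e₂‖ := norm_add_le _ _
      _ = ‖c‖ + ‖t‖ := by rw [norm_smul, norm_smul, hne₁, hne₂]; ring
      _ ≤ ρ := h
  have hgA : ∀ c t : ℂ, X c t ∈ U → AnalyticAt ℂ (fun s : ℂ => g (X c s)) t := by
    intro c t hmem
    have hopen : IsOpen ((fun s : ℂ => X c s) ⁻¹' U) := hU.preimage (hXc c)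
    have hdo : DifferentiableOn ℂ (fun s : ℂ => g (X c s)) ((fun s : ℂ => X c s) ⁻¹' U) :=
      hg.comp ((hXd c).differentiableOn) (Set.mapsTo_preimage _ _)
    exact hdo.analyticAt (hopen.mem_nhds hmem)
  have hψan : AnalyticAt ℂ (fun s : ℂ => g (X 0 s) - a) 0 :=
    ((hgA 0 0 (hX00 ▸ hpU)).sub analyticAt_const)
  rcases hψan.eventually_eq_zero_or_eventually_ne_zero with hA | hB
  · -- the whole line through p in direction e₂ is (locally, then globally) inside M
    set A : Set ℂ := (fun t : ℂ => X 0 t) ⁻¹' M with hAdef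
    have hAclosed : IsClosed A := hMclosed.preimage (hXc 0)
    have hInt : ∀ t : ℂ, X 0 t ∈ U →
        ((fun s : ℂ => g (X 0 s) - a) =ᶠ[𝓝 t] 0) → t ∈ interior A := by
      intro t htU h1
      have hUe : ∀ᶠ s in 𝓝 t, X 0 s ∈ U :=
        (hXc 0).continuousAt.preimage_mem_nhds (hU.mem_nhds htU)
      have : ∀ᶠ s in 𝓝 t, s ∈ A := by
        filter_upwards [h1, hUe] with s hs1 hs2
        exact ⟨hs2, sub_eq_zero.1 hs1⟩
      exact mem_interior_iff_mem_nhds.2 this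
  -- interior A is closed
    have hA'closed : IsClosed (interior A) := by
      rw [← closure_subset_iff_isClosed]
      intro t ht
      by_cases htA' : t ∈ interior A
      · exact htA'
      have htA : t ∈ A := hAclosed.closure_subset ((closure_mono interior_subset) ht)
      have htU : X 0 t ∈ U := htA.1
      have han : AnalyticAt ℂ (fun s : ℂ => g (X 0 s) - a) t :=
        (hgA 0 t htU).sub analyticAt_const
      rcases han.eventually_eq_zero_or_eventually_ne_zero with h1 | h2
      · exact hInt t htU h1
      · exfalso
        have hdiff : interior A \ {t} = interior A := Set.diff_singleton_eq_self htA'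
        have hcl : t ∈ closure (interior A \ {t}) := by rw [hdiff]; exact ht
        haveI hnb : (𝓝[interior A \ {t}] t).NeBot :=
          mem_closure_iff_nhdsWithin_neBot.1 hcl
        have hsub : 𝓝[interior A \ {t}] t ≤ 𝓝[≠] t :=
          nhdsWithin_mono t (fun s hs => hs.2)
        have h2' : ∀ᶠ s in 𝓝[interior A \ {t}] t, g (X 0 s) - a ≠ 0 := h2.filter_mono hsub
        obtain ⟨s, hs1, hs2⟩ := (h2'.and self_mem_nhdsWithin).exists
        have hsA : s ∈ A := interior_subset hs2.1
        exact hs1 (sub_eq_zero.2 hsA.2)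
    have h0 : (0 : ℂ) ∈ interior A := hInt 0 (hX00 ▸ hpU) hA
    rcases isClopen_iff.1 ⟨hA'closed, isOpen_interior⟩ with h | h
    · rw [h] at h0; exact h0
    · obtain ⟨C, hC⟩ := Metric.isBounded_iff.1 hM.isBounded
      have hC0 : (0:ℝ) ≤ C := by simpa using hC hpM hpM
      have h1M : X 0 ((C+1 : ℝ) : ℂ) ∈ M := by
        have h2 : ((C+1 : ℝ) : ℂ) ∈ A := interior_subset (by rw [h]; exact mem_univ _)
        exact h2
      have hdd := hC hpM h1M
      have hdist : dist p (X 0 ((C+1:ℝ):ℂ)) = C + 1 := by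
        have h1 : p - X 0 ((C+1:ℝ):ℂ) = -(((C+1:ℝ):ℂ) • e₂) := by simp [hXdef]
        rw [dist_eq_norm, h1, norm_neg, norm_smul, hne₂, mul_one, Complex.norm_real,
          Real.norm_eq_abs, abs_of_nonneg (by linarith)]
      rw [hdist] at hdd
      linarith
  · -- isolated zero: Hurwitz-type argument pushes the fiber past the maximum
    obtain ⟨ε, hε0, hεne⟩ : ∃ ε > 0, ∀ s : ℂ, dist s 0 < ε → s ≠ 0 → g (X 0 s) - a ≠ 0 := by
      obtain ⟨ε, hε0, hεs⟩ := Metric.mem_nhdsWithin_iff.1 hB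
      exact ⟨ε, hε0, fun s h1 h2 => hεs ⟨Metric.mem_ball.2 h1, h2⟩⟩
    set r : ℝ := min (ε/2) (ρ/2) with hrdef
    have hr0 : 0 < r := lt_min (by linarith) (by linarith)
    have hrε : r < ε := (min_le_left _ _).trans_lt (by linarith)
    have hrρ : r ≤ ρ/2 := min_le_right _ _
    have hsphU : ∀ t : ℂ, ‖t‖ ≤ r → X 0 t ∈ U := by
      intro t ht
      exact hρU (hXQ 0 t (by simpa using ht.trans (by linarith)))
    have hcontψ : ContinuousOn (fun t : ℂ => g (X 0 t) - a) (Metric.sphere 0 r) := by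
      refine ContinuousOn.sub ?_ continuousOn_const
      refine hg.continuousOn.comp ((hXc 0).continuousOn) ?_
      intro t ht
      exact hsphU t (le_of_eq (by simpa [Complex.dist_eq] using ht))
    have hsne : ((r : ℂ)) ∈ Metric.sphere (0:ℂ) r := by
      simp [Complex.norm_real, abs_of_pos hr0]
    obtain ⟨t₁, ht₁, hmin⟩ := (isCompact_sphere (0:ℂ) r).exists_isMinOn ⟨_, hsne⟩
      hcontψ.norm
    set μ : ℝ := ‖g (X 0 t₁) - a‖ with hμdef
    have ht₁n : ‖t₁‖ = r := by simpa [Complex.dist_eq] using ht₁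
    have hμ0 : 0 < μ := by
      rw [hμdef, norm_pos_iff]
      refine hεne t₁ ?_ ?_
      · simpa [Complex.dist_eq, ht₁n] using hrε
      · intro h; rw [h] at ht₁n; simp at ht₁n; linarith
    have huc := hQ.uniformContinuousOn_of_continuous (hg.continuousOn.mono hρU)
    rw [Metric.uniformContinuousOn_iff] at huc
    obtain ⟨δ, hδ0, hδ⟩ := huc (μ/2) (by positivity)
    set u : ℝ := min (δ/2) (ρ/2) with hudef
    have hu0 : 0 < u := lt_min (by linarith) (by linarith)
    have huδ : u < δ := (min_le_left _ _).trans_lt (by linarith)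
    have huρ : u ≤ ρ/2 := min_le_right _ _
    have hmemQ : ∀ t : ℂ, ‖t‖ ≤ r → X (u:ℝ) t ∈ Q := by
      intro t ht
      refine hXQ _ t ?_
      have : ‖((u:ℝ):ℂ)‖ = u := by
        rw [Complex.norm_real, Real.norm_eq_abs, abs_of_pos hu0]
      rw [this]; linarith [ht.trans hrρ]
    have hmemQ0 : ∀ t : ℂ, ‖t‖ ≤ r → X 0 t ∈ Q := by
      intro t ht
      exact hXQ 0 t (by simpa using ht.trans (by linarith))
    have hclose : ∀ t : ℂ, ‖t‖ ≤ r →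
        dist (g (X (u:ℝ) t)) (g (X 0 t)) < μ/2 := by
      intro t ht
      refine hδ _ (hmemQ t ht) _ (hmemQ0 t ht) ?_
      have h1 : X (u:ℝ) t - X 0 t = ((u:ℝ):ℂ) • e₁ := by simp [hXdef]
      rw [dist_eq_norm, h1, norm_smul, hne₁, mul_one, Complex.norm_real,
        Real.norm_eq_abs, abs_of_pos hu0]
      exact huδ
    by_cases hzero : ∃ t ∈ Metric.closedBall (0:ℂ) r, g (X (u:ℝ) t) = a
    · obtain ⟨t, htb, hgt⟩ := hzero
      have htn : ‖t‖ ≤ r := by simpa [Complex.dist_eq] using htb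
      have hxM : X (u:ℝ) t ∈ M := ⟨hρU (hmemQ t htn), hgt⟩
      have h5 : ((X (u:ℝ) t) i₁).re ≤ (p i₁).re := hpmax hxM
      have hcoord : ((X (u:ℝ) t) i₁).re = (p i₁).re + u := by
        simp [hXdef, he1, he2, EuclideanSpace.single_apply, h12, Ne.symm h12]
      rw [hcoord] at h5
      linarith
    · push_neg at hzero
      have hballU : ∀ t : ℂ, t ∈ Metric.closedBall (0:ℂ) r → X (u:ℝ) t ∈ U := by
        intro t ht
        exact hρU (hmemQ t (by simpa [Complex.dist_eq] using ht))
      have hχd : DifferentiableOn ℂ (fun t : ℂ => (g (X (u:ℝ) t) - a)⁻¹) (Metric.ball 0 r) := by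
        refine DifferentiableOn.inv ?_ ?_
        · refine DifferentiableOn.sub ?_ (differentiableOn_const a)
          refine hg.comp ((hXd _).differentiableOn) ?_
          intro t ht
          exact hballU t (Metric.ball_subset_closedBall ht)
        · intro t ht
          exact sub_ne_zero.2 (hzero t (Metric.ball_subset_closedBall ht))
      have hχc : ContinuousOn (fun t : ℂ => (g (X (u:ℝ) t) - a)⁻¹) (Metric.closedBall 0 r) := by
        refine ContinuousOn.inv₀ ?_ ?_
        · refine ContinuousOn.sub ?_ continuousOn_const
          exact hg.continuousOn.comp ((hXc _).continuousOn) hballU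
        · intro t ht; exact sub_ne_zero.2 (hzero t ht)
      have hdcc : DiffContOnCl ℂ (fun t : ℂ => (g (X (u:ℝ) t) - a)⁻¹) (Metric.ball 0 r) := by
        refine ⟨hχd, ?_⟩
        rw [closure_ball (0:ℂ) hr0.ne']
        exact hχc
      have hbound : ∀ z ∈ frontier (Metric.ball (0:ℂ) r),
          ‖(g (X (u:ℝ) z) - a)⁻¹‖ ≤ (μ/2)⁻¹ := by
        intro z hz
        rw [frontier_ball (0:ℂ) hr0.ne'] at hz
        have hzn : ‖z‖ = r := by simpa [Complex.dist_eq] using hz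
        have hμz : μ ≤ ‖g (X 0 z) - a‖ := hmin (by simpa [Complex.dist_eq, hzn])
        have hcl := hclose z (le_of_eq hzn)
        have hd2 : ‖(g (X (u:ℝ) z) - a) - (g (X 0 z) - a)‖ < μ/2 := by
          simpa [dist_eq_norm, sub_sub_sub_cancel_right] using hcl
        have h3 : μ/2 ≤ ‖g (X (u:ℝ) z) - a‖ := by
          have := norm_sub_norm_le (g (X 0 z) - a) (g (X (u:ℝ) z) - a)
          rw [norm_sub_rev] at hd2
          linarith
        rw [norm_inv]
        exact inv_anti₀ (by positivity) h3
      have hz0 : (0:ℂ) ∈ closure (Metric.ball (0:ℂ) r) := by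
        rw [closure_ball (0:ℂ) hr0.ne']
        exact Metric.mem_closedBall_self hr0.le
      have hkey := Complex.norm_le_of_forall_mem_frontier_norm_le
        Metric.isBounded_ball hdcc hbound hz0
      have hχ00 : ‖g (X (u:ℝ) 0) - a‖ < μ/2 := by
        have := hclose 0 (by simp [hr0.le])
        have hgp : g (X 0 0) = a := by rw [hX00]; exact hpM.2
        rwa [hgp, dist_eq_norm] at this
      have hχ0ne : g (X (u:ℝ) 0) - a ≠ 0 :=
        sub_ne_zero.2 (hzero 0 (Metric.mem_closedBall_self hr0.le))
      rw [norm_inv] at hkey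
      have h4 : μ/2 ≤ ‖g (X (u:ℝ) 0) - a‖ := by
        have hpos : 0 < ‖g (X (u:ℝ) 0) - a‖ := norm_pos_iff.2 hχ0ne
        have := (inv_le_inv₀ hpos (by positivity : (0:ℝ) < μ/2)).1 hkey
        linarith [this]
      linarith


/-- Core of Proposition 1.4: on a connected noncompact complex manifold of
dimension `> 1` (here a connected open `U ⊆ ℂ^n`, `n > 1`), for a nonconstant
holomorphic map `f : U → ℂ^q` and any compact `K ⊆ U`, the set
`U \ f⁻¹(f(K))` is nonempty and not relatively compact in `U`. -/
theorem stmt_8 (n q : ℕ) (hn : 1 < n)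
    (U : Set (EuclideanSpace ℂ (Fin n)))
    (hU : IsOpen U) (hUc : IsConnected U) (hUnc : ¬ IsCompact U)
    (f : EuclideanSpace ℂ (Fin n) → EuclideanSpace ℂ (Fin q))
    (hf : DifferentiableOn ℂ f U)
    (hnc : ¬ ∃ c, ∀ x ∈ U, f x = c)
    (K : Set (EuclideanSpace ℂ (Fin n))) (hK : IsCompact K) (hKU : K ⊆ U) :
    (U \ f ⁻¹' (f '' K)).Nonempty ∧
      ¬ IsCompact (closure (U \ f ⁻¹' (f '' K)) ∩ U) := by
  obtain ⟨x₁, hx₁U⟩ := hUc.nonempty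
  have hync : ∃ y ∈ U, f y ≠ f x₁ := by
    by_contra h; push_neg at h; exact hnc ⟨f x₁, h⟩
  obtain ⟨y, hyU, hyne⟩ := hync
  obtain ⟨j, hj⟩ : ∃ j, f y j ≠ f x₁ j := by
    by_contra h; push_neg at h; exact hyne (PiLp.ext h)
  set g : EuclideanSpace ℂ (Fin n) → ℂ := fun x => f x j with hgdef
  have hgU : DifferentiableOn ℂ g U :=
    (EuclideanSpace.proj (𝕜 := ℂ) j).differentiable.comp_differentiableOn hf
  have hstepA : ∃ x₀ ∈ U, ∀ k ∈ K, g k ≠ g x₀ := by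
    by_contra h
    push_neg at h
    have hKne : K.Nonempty := by
      obtain ⟨k, hk, -⟩ := h x₁ hx₁U; exact ⟨k, hk⟩
    have hgK : IsCompact (g '' K) := hK.image_of_continuousOn (hgU.continuousOn.mono hKU)
    obtain ⟨w, hwK, hwmax⟩ := hgK.exists_isMaxOn (hKne.image g) continuous_norm.continuousOn
    obtain ⟨k₀, hk₀K, hk₀⟩ := hwK
    have hmax : IsMaxOn (norm ∘ g) U k₀ := by
      intro x hx
      obtain ⟨k, hkK, hkg⟩ := h x hx
      have h1 : ‖g k‖ ≤ ‖w‖ := hwmax (Set.mem_image_of_mem g hkK)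
      show ‖g x‖ ≤ ‖g k₀‖
      rw [← hkg, hk₀]
      exact h1
    have hconst := Complex.eqOn_of_isPreconnected_of_isMaxOn_norm hUc.isPreconnected hU hgU
      (hKU hk₀K) hmax
    exact hj ((hconst hyU).trans (hconst hx₁U).symm)
  obtain ⟨x₀, hx₀U, hx₀⟩ := hstepA
  set S := U \ f ⁻¹' (f '' K) with hSdef
  have hx₀S : x₀ ∈ S := by
    refine ⟨hx₀U, ?_⟩
    intro hmem
    obtain ⟨k, hkK, hkf⟩ := hmem
    exact hx₀ k hkK (congrArg (fun v => v j) hkf)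
  refine ⟨⟨x₀, hx₀S⟩, ?_⟩
  intro hcomp
  have hSU : S ⊆ U := Set.diff_subset
  have hsubC : closure S ⊆ closure S ∩ U :=
    closure_minimal (Set.subset_inter subset_closure hSU) hcomp.isClosed
  have hclU : closure S ⊆ U := fun x hx => (hsubC hx).2
  have hScomp : IsCompact (closure S) := by
    have heq : closure S ∩ U = closure S := Set.inter_eq_left.2 hclU
    rwa [heq] at hcomp
  have hMS : {x | x ∈ U ∧ g x = g x₀} ⊆ S := by
    rintro x ⟨hxU, hxg⟩
    refine ⟨hxU, ?_⟩
    intro hmem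
    obtain ⟨k, hkK, hkf⟩ := hmem
    exact hx₀ k hkK ((congrArg (fun v => v j) hkf).trans hxg)
  have hMcl : IsClosed {x | x ∈ U ∧ g x = g x₀} := by
    refine isClosed_of_closure_subset ?_
    intro x hx
    have hxU : x ∈ U := hclU (closure_minimal (hMS.trans subset_closure) isClosed_closure hx)
    have hcw : ContinuousWithinAt g {x | x ∈ U ∧ g x = g x₀} x :=
      ((hgU.continuousOn x hxU).continuousAt (hU.mem_nhds hxU)).continuousWithinAt
    have h1 := hcw.mem_closure_image hx
    have himg : g '' {x | x ∈ U ∧ g x = g x₀} ⊆ {g x₀} := by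
      rintro _ ⟨z, hz, rfl⟩; exact hz.2
    have h2 : g x ∈ closure ({g x₀} : Set ℂ) := closure_mono himg h1
    rw [closure_singleton] at h2
    exact ⟨hxU, h2⟩
  have hMcomp : IsCompact {x | x ∈ U ∧ g x = g x₀} :=
    hScomp.of_isClosed_subset hMcl (hMS.trans subset_closure)
  exact no_compact_fiber hn hU hgU hMcomp ⟨x₀, hx₀U, rfl⟩
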